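/- (Top-index criterion of type D, k ≤ n−2.) Let n ≥ 3 and 1 ≤ k ≤ n−2, and let a_1,…,a_n be nonnegative integers. Then for every integer t, the number of positive roots α ∈ Φ⁺_D with ⟨w(t), α⟩ < 0 equals k(4n−1−3k)/2 (the dimension of the isotropic Grassmannian D_n/P(α_k)) if and only if t > M^D_{k,a}. -/
import Mathlib


open Finset

/-- The positive roots of type `Dₙ`: `eₚ+e_q` and `eₚ-e_q` (`p<q`). -/
def PhiD (n : ℕ) : Set (Fin n → ℝ) :=
  {α | ∃ p q : Fin n, p < q ∧
      α = fun i => (if i = p then (1:ℝ) else 0) + (if i = q then 1 else 0)} ∪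
  {α | ∃ p q : Fin n, p < q ∧
      α = fun i => (if i = p then (1:ℝ) else 0) - (if i = q then 1 else 0)}

/-- Standard inner product on `ℝⁿ`. -/
noncomputable def ip (n : ℕ) (v w : Fin n → ℝ) : ℝ := ∑ i, v i * w i

/-- The coordinate form of the weight `λ+ρ-tλ_k` for type `Dₙ`, `k ≤ n-2`
(coordinates are indexed one-based). -/
noncomputable def wD (n k : ℕ) (a : ℕ → ℤ) (t : ℤ) : Fin n → ℝ := fun i =>
  if i.val + 1 = n then ((a n : ℝ) - (a (n - 1) : ℝ)) / 2
  else (∑ u ∈ Icc (i.val + 1) (n - 2), (a u : ℝ)) + ((a (n - 1) : ℝ) + (a n : ℝ)) / 2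
    + ((n : ℝ) - (i.val + 1)) - (if i.val + 1 ≤ k then (t : ℝ) else 0)

/-- `M^D_{k,a}`, the largest entry of the step matrix. -/
def MD (n k : ℕ) (a : ℕ → ℤ) : ℤ :=
  (∑ u ∈ Icc 1 n, a u) + (∑ u ∈ Icc (k + 1) (n - 2), a u)
    + 2 * (n : ℤ) - (k : ℤ) - 2

noncomputable def auxT (n : ℕ) (a : ℕ → ℤ) (p : ℕ) : ℝ := ∑ u ∈ Ioc p (n-2), (a u : ℝ)
noncomputable def auxB (n : ℕ) (a : ℕ → ℤ) (p : ℕ) : ℝ :=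
  auxT n a p + ((a (n-1) : ℝ) + (a n : ℝ))/2 + ((n : ℝ) - (p+1))

lemma auxT_nonneg (n : ℕ) (a : ℕ → ℤ) (ha : ∀ u, 1 ≤ u → u ≤ n → 0 ≤ a u) (p : ℕ) :
    0 ≤ auxT n a p := by
  apply Finset.sum_nonneg
  intro u hu
  simp only [mem_Ioc] at hu
  have := ha u (by omega) (by omega)
  exact_mod_cast this

lemma auxT_split (n : ℕ) (a : ℕ → ℤ) {p q : ℕ} (hpq : p ≤ q) (hq : q ≤ n - 2) :
    auxT n a p = (∑ u ∈ Ioc p q, (a u : ℝ)) + auxT n a q := by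
  rw [auxT, auxT, Finset.sum_Ioc_consecutive _ hpq hq]

lemma auxT_le (n : ℕ) (a : ℕ → ℤ) (ha : ∀ u, 1 ≤ u → u ≤ n → 0 ≤ a u) {p q : ℕ}
    (hpq : p ≤ q) (hq : q ≤ n - 2) : auxT n a q ≤ auxT n a p := by
  rw [auxT_split n a hpq hq]
  have : (0:ℝ) ≤ ∑ u ∈ Ioc p q, (a u : ℝ) := by
    apply Finset.sum_nonneg
    intro u hu
    simp only [mem_Ioc] at hu
    have := ha u (by omega) (by omega)
    exact_mod_cast this
  linarith

lemma auxB_mono (n : ℕ) (a : ℕ → ℤ) (ha : ∀ u, 1 ≤ u → u ≤ n → 0 ≤ a u) {p q : ℕ}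
    (hpq : p ≤ q) (hq : q ≤ n - 2) : auxB n a q + ((q:ℝ) - (p:ℝ)) ≤ auxB n a p := by
  have h1 := auxT_le n a ha hpq hq
  rw [auxB, auxB]
  ring_nf
  linarith

lemma auxB_ge (n : ℕ) (a : ℕ → ℤ) (hn : 3 ≤ n) (ha : ∀ u, 1 ≤ u → u ≤ n → 0 ≤ a u)
    {p : ℕ} (hp : p ≤ n - 2) : (1:ℝ) ≤ auxB n a p := by
  have h1 := auxT_nonneg n a ha p
  have h2 : (0:ℤ) ≤ a (n-1) := ha _ (by omega) (by omega)
  have h3 : (0:ℤ) ≤ a n := ha _ (by omega) (by omega)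
  have h2' : (0:ℝ) ≤ (a (n-1):ℝ) := by exact_mod_cast h2
  have h3' : (0:ℝ) ≤ (a n:ℝ) := by exact_mod_cast h3
  have hp' : (p:ℝ) + 1 + 1 ≤ (n:ℝ) := by exact_mod_cast (by omega : p + 2 ≤ n)
  rw [auxB]
  linarith

lemma MD_eq (n k : ℕ) (a : ℕ → ℤ) (hn : 3 ≤ n) (hk : k ≤ n - 2) :
    (MD n k a : ℝ) = auxB n a 0 + auxB n a k := by
  have h1 : Icc 1 n = Ioc 0 n := (Finset.Icc_add_one_left_eq_Ioc 0 n)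
  have h2 : Icc (k+1) (n-2) = Ioc k (n-2) := (Finset.Icc_add_one_left_eq_Ioc k (n-2))
  have h3 : (∑ u ∈ Ioc 0 (n-2), (a u:ℝ)) + ∑ u ∈ Ioc (n-2) n, (a u:ℝ)
      = ∑ u ∈ Ioc 0 n, (a u:ℝ) := Finset.sum_Ioc_consecutive _ (by omega) (by omega)
  have h4 : Ioc (n-2) n = {n-1, n} := by ext u; simp; omega
  have h5 : (∑ u ∈ Ioc (n-2) n, (a u:ℝ)) = (a (n-1):ℝ) + (a n:ℝ) := by
    rw [h4]
    rw [Finset.sum_insert (by simp; omega), Finset.sum_singleton]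
  have hn' : (3:ℝ) ≤ (n:ℝ) := by exact_mod_cast hn
  have hk' : (k:ℝ) + 2 ≤ (n:ℝ) := by exact_mod_cast (by omega : k + 2 ≤ n)
  rw [MD, auxB, auxB, auxT, auxT]
  push_cast [h1, h2]
  rw [← h3, h5]
  ring

lemma wD_eq (n k : ℕ) (a : ℕ → ℤ) (t : ℤ) (i : Fin n) (h : i.val + 1 ≠ n) :
    wD n k a t i = auxB n a i.val - (if i.val + 1 ≤ k then (t:ℝ) else 0) := by
  rw [wD, if_neg h, auxB, auxT, Finset.Icc_add_one_left_eq_Ioc]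



lemma wD_last (n k : ℕ) (a : ℕ → ℤ) (t : ℤ) (i : Fin n) (h : i.val + 1 = n) :
    wD n k a t i = ((a n : ℝ) - (a (n-1) : ℝ))/2 := by
  rw [wD, if_pos h]

lemma ip_plus (n : ℕ) (v : Fin n → ℝ) (p q : Fin n) (h : p ≠ q) :
    (∑ i, v i * ((if i = p then (1:ℝ) else 0) + (if i = q then 1 else 0))) = v p + v q := by
  simp only [mul_add, Finset.sum_add_distrib, mul_ite, mul_one, mul_zero,
    Finset.sum_ite_eq', Finset.mem_univ, if_pos]

lemma ip_minus (n : ℕ) (v : Fin n → ℝ) (p q : Fin n) (h : p ≠ q) :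
    (∑ i, v i * ((if i = p then (1:ℝ) else 0) - (if i = q then 1 else 0))) = v p - v q := by
  simp only [mul_sub, Finset.sum_sub_distrib, mul_ite, mul_one, mul_zero,
    Finset.sum_ite_eq', Finset.mem_univ, if_pos]


lemma card_fin_lt (n k : ℕ) :
    ((univ : Finset (Fin n)).filter (fun i => i.val < k)).card = min k n := by
  have h : (univ : Finset (Fin n)).filter (fun i => i.val < k)
      = (range (min k n)).attachFin (fun m hm => by simp at hm; omega) := by
    ext i
    simp only [Finset.mem_filter, Finset.mem_univ, true_and, Finset.mem_attachFin,
      Finset.mem_range]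
    omega
  rw [h, Finset.card_attachFin, Finset.card_range]

lemma card_fin_ge (n k : ℕ) (hk : k ≤ n) :
    ((univ : Finset (Fin n)).filter (fun i => k ≤ i.val)).card = n - k := by
  have h := Finset.card_filter_add_card_filter_not
    (s := (univ : Finset (Fin n))) (p := fun i : Fin n => i.val < k)
  simp only [not_lt, Finset.card_univ, Fintype.card_fin] at h
  have h2 := card_fin_lt n k
  omega

lemma card_pairs_mixed (n k : ℕ) (hk : k ≤ n) :
    ((univ : Finset (Fin n × Fin n)).filter
      (fun pq => pq.1.val < k ∧ k ≤ pq.2.val)).card = k * (n - k) := by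
  rw [← Finset.univ_product_univ,
    Finset.filter_product (fun i : Fin n => i.val < k) (fun i : Fin n => k ≤ i.val),
    Finset.card_product, card_fin_lt, card_fin_ge n k hk, min_eq_left hk]

lemma card_pairs_both (n k : ℕ) (hk : k ≤ n) :
    ((univ : Finset (Fin n × Fin n)).filter
      (fun pq => pq.1.val < k ∧ pq.2.val < k)).card = k * k := by
  rw [← Finset.univ_product_univ,
    Finset.filter_product (fun i : Fin n => i.val < k) (fun i : Fin n => i.val < k),
    Finset.card_product, card_fin_lt, min_eq_left hk]

lemma card_pairs_lt (n k : ℕ) (hk : k ≤ n) :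
    2 * ((univ : Finset (Fin n × Fin n)).filter
      (fun pq => pq.1 < pq.2 ∧ pq.2.val < k)).card + k = k * k := by
  classical
  have hAB : ((univ : Finset (Fin n × Fin n)).filter
        (fun pq => pq.1 < pq.2 ∧ pq.2.val < k)).card
      = ((univ : Finset (Fin n × Fin n)).filter
        (fun pq => pq.2 < pq.1 ∧ pq.1.val < k)).card := by
    apply Finset.card_bij' (fun x _ => (x.2, x.1)) (fun x _ => (x.2, x.1)) <;>
      intro x hx <;>
      simp only [Finset.mem_filter, Finset.mem_univ, true_and] at hx ⊢ <;>
      simp [hx]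
  have hD : ((univ : Finset (Fin n × Fin n)).filter
      (fun pq => pq.1 = pq.2 ∧ pq.1.val < k)).card = k := by
    have heq : ((univ : Finset (Fin n × Fin n)).filter
        (fun pq => pq.1 = pq.2 ∧ pq.1.val < k)).card
        = ((univ : Finset (Fin n)).filter (fun i => i.val < k)).card := by
      apply Finset.card_bij' (fun (x : Fin n × Fin n) _ => x.1) (fun i _ => (i, i))
      · intro x hx
        simp only [Finset.mem_filter, Finset.mem_univ, true_and] at hx ⊢
        exact hx.2
      · intro i hi
        simp only [Finset.mem_filter, Finset.mem_univ, true_and] at hi ⊢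
        exact hi
      · intro x hx
        simp only [Finset.mem_filter, Finset.mem_univ, true_and] at hx
        simp only [Prod.ext_iff]
        exact ⟨trivial, hx.1⟩
      · intro i hi
        rfl
    rw [heq, card_fin_lt, min_eq_left hk]

  have hd1 : Disjoint ((univ : Finset (Fin n × Fin n)).filter
        (fun pq => pq.1 < pq.2 ∧ pq.2.val < k))
      ((univ : Finset (Fin n × Fin n)).filter
        (fun pq => pq.2 < pq.1 ∧ pq.1.val < k)) := by
    rw [Finset.disjoint_left]
    intro x hx hx'
    simp only [Finset.mem_filter, Finset.mem_univ, true_and, Fin.lt_def] at hx hx'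
    omega
  have hd2 : Disjoint (((univ : Finset (Fin n × Fin n)).filter
        (fun pq => pq.1 < pq.2 ∧ pq.2.val < k)) ∪
      ((univ : Finset (Fin n × Fin n)).filter
        (fun pq => pq.2 < pq.1 ∧ pq.1.val < k)))
      ((univ : Finset (Fin n × Fin n)).filter
        (fun pq => pq.1 = pq.2 ∧ pq.1.val < k)) := by
    rw [Finset.disjoint_left]
    intro x hx hx'
    simp only [Finset.mem_filter, Finset.mem_univ, true_and, Finset.mem_union,
      Fin.lt_def, Fin.ext_iff] at hx hx'
    omega
  have hunion : (((univ : Finset (Fin n × Fin n)).filter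
        (fun pq => pq.1 < pq.2 ∧ pq.2.val < k)) ∪
      ((univ : Finset (Fin n × Fin n)).filter
        (fun pq => pq.2 < pq.1 ∧ pq.1.val < k))) ∪
      ((univ : Finset (Fin n × Fin n)).filter
        (fun pq => pq.1 = pq.2 ∧ pq.1.val < k))
      = (univ : Finset (Fin n × Fin n)).filter
        (fun pq => pq.1.val < k ∧ pq.2.val < k) := by
    ext x
    simp only [Finset.mem_filter, Finset.mem_univ, true_and, Finset.mem_union,
      Fin.lt_def, Fin.ext_iff]
    omega
  have hb := card_pairs_both n k hk
  rw [← hunion, Finset.card_union_of_disjoint hd2, Finset.card_union_of_disjoint hd1] at hb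
  omega

section Signs

variable {n k : ℕ} {a : ℕ → ℤ} {t : ℤ}

lemma signF_plus (hn : 3 ≤ n) (hk1 : 1 ≤ k) (hkn : k ≤ n - 2)
    (ha : ∀ u, 1 ≤ u → u ≤ n → 0 ≤ a u) (p q : Fin n) (hpq : p < q)
    (hneg : wD n k a t p + wD n k a t q < 0) : p.val < k := by
  by_contra hpk
  push_neg at hpk
  have hq : q.val < n := q.isLt
  have hpq' : p.val < q.val := hpq
  have hp1 : p.val + 1 ≠ n := by omega
  have hwp : wD n k a t p = auxB n a p.val := by
    rw [wD_eq n k a t p hp1, if_neg (by omega)]; ring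
  have hBp : (1:ℝ) ≤ auxB n a p.val := auxB_ge n a hn ha (by omega)
  by_cases hql : q.val + 1 = n
  · have hwq := wD_last n k a t q hql
    have hTp := auxT_nonneg n a ha p.val
    have han : (0:ℝ) ≤ (a n : ℝ) := by exact_mod_cast ha n (by omega) le_rfl
    have hc : (p.val : ℝ) + 1 + 1 ≤ (n:ℝ) := by exact_mod_cast (by omega : p.val + 2 ≤ n)
    rw [hwp, hwq] at hneg
    simp only [auxB] at hneg
    linarith
  · have hwq : wD n k a t q = auxB n a q.val := by
      rw [wD_eq n k a t q hql, if_neg (by omega)]; ring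
    have hBq : (1:ℝ) ≤ auxB n a q.val := auxB_ge n a hn ha (by omega)
    rw [hwp, hwq] at hneg
    linarith

lemma signF_minus (hn : 3 ≤ n) (hk1 : 1 ≤ k) (hkn : k ≤ n - 2)
    (ha : ∀ u, 1 ≤ u → u ≤ n → 0 ≤ a u) (p q : Fin n) (hpq : p < q)
    (hneg : wD n k a t p - wD n k a t q < 0) : p.val < k ∧ k ≤ q.val := by
  have hq : q.val < n := q.isLt
  have hpq' : p.val < q.val := hpq
  have hp1 : p.val + 1 ≠ n := by omega
  by_contra hc
  push_neg at hc
  -- two cases : k ≤ p.val, or (p.val < k ∧ q.val < k)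
  by_cases hpk : k ≤ p.val
  · have hwp : wD n k a t p = auxB n a p.val := by
      rw [wD_eq n k a t p hp1, if_neg (by omega)]; ring
    by_cases hql : q.val + 1 = n
    · have hwq := wD_last n k a t q hql
      have hTp := auxT_nonneg n a ha p.val
      have han1 : (0:ℝ) ≤ (a (n-1) : ℝ) := by exact_mod_cast ha (n-1) (by omega) (by omega)
      have hcc : (p.val : ℝ) + 1 + 1 ≤ (n:ℝ) := by exact_mod_cast (by omega : p.val + 2 ≤ n)
      rw [hwp, hwq] at hneg; simp only [auxB] at hneg
      linarith
    · have hwq : wD n k a t q = auxB n a q.val := by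
        rw [wD_eq n k a t q hql, if_neg (by omega)]; ring
      have hmono := auxB_mono n a ha (le_of_lt hpq') (by omega : q.val ≤ n - 2)
      have hcc : (1:ℝ) ≤ (q.val:ℝ) - (p.val:ℝ) := by
        have : (p.val:ℝ) + 1 ≤ (q.val:ℝ) := by exact_mod_cast (by omega : p.val + 1 ≤ q.val)
        linarith
      rw [hwp, hwq] at hneg
      linarith
  · -- p.val < k, so by hc q.val < k
    push_neg at hpk
    have hqk : q.val < k := by
      rcases lt_or_ge q.val k with h | h
      · exact h
      · exact absurd (hc hpk) (by omega)
    have hql : q.val + 1 ≠ n := by omega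
    have hwp : wD n k a t p = auxB n a p.val - t := by
      rw [wD_eq n k a t p hp1, if_pos (by omega)]
    have hwq : wD n k a t q = auxB n a q.val - t := by
      rw [wD_eq n k a t q hql, if_pos (by omega)]
    have hmono := auxB_mono n a ha (le_of_lt hpq') (by omega : q.val ≤ n - 2)
    have hcc : (1:ℝ) ≤ (q.val:ℝ) - (p.val:ℝ) := by
      have : (p.val:ℝ) + 1 ≤ (q.val:ℝ) := by exact_mod_cast (by omega : p.val + 1 ≤ q.val)
      linarith
    rw [hwp, hwq] at hneg
    linarith

lemma signG_plus (hn : 3 ≤ n) (hk1 : 1 ≤ k) (hkn : k ≤ n - 2)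
    (ha : ∀ u, 1 ≤ u → u ≤ n → 0 ≤ a u) (ht : MD n k a < t) (p q : Fin n) (hpq : p < q)
    (hpk : p.val < k) : wD n k a t p + wD n k a t q < 0 := by
  have hq : q.val < n := q.isLt
  have hpq' : p.val < q.val := hpq
  have hp1 : p.val + 1 ≠ n := by omega
  have hM := MD_eq n k a hn hkn
  have hMt : (MD n k a : ℝ) < (t : ℝ) := by exact_mod_cast ht
  have hwp : wD n k a t p = auxB n a p.val - t := by
    rw [wD_eq n k a t p hp1, if_pos (by omega)]
  have hmono0 : auxB n a p.val ≤ auxB n a 0 := by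
    have h := auxB_mono n a ha (Nat.zero_le p.val) (by omega : p.val ≤ n - 2)
    have h2 : (0:ℝ) ≤ (p.val:ℝ) := by positivity
    push_cast at h
    linarith
  have hBk : (1:ℝ) ≤ auxB n a k := auxB_ge n a hn ha (by omega)
  by_cases hql : q.val + 1 = n
  · have hwq := wD_last n k a t q hql
    -- w p + w q = auxT p + a n + (n - p - 1) - t ≤ M - t < 0
    have hTsplit := auxT_split n a (Nat.zero_le p.val) (by omega : p.val ≤ n - 2)
    have hTp : auxT n a p.val ≤ auxT n a 0 := auxT_le n a ha (Nat.zero_le _) (by omega)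
    have hTk : 0 ≤ auxT n a k := auxT_nonneg n a ha k
    have han1 : (0:ℝ) ≤ (a (n-1) : ℝ) := by exact_mod_cast ha (n-1) (by omega) (by omega)
    have hck : (k:ℝ) + 2 ≤ (n:ℝ) := by exact_mod_cast (by omega : k + 2 ≤ n)
    have hp0 : (0:ℝ) ≤ (p.val:ℝ) := by positivity
    rw [hwp, hwq]
    simp only [auxB] at hM ⊢
    linarith
  · have hqk2 : q.val ≤ n - 2 := by omega
    by_cases hqk : k ≤ q.val
    · have hwq : wD n k a t q = auxB n a q.val := by
        rw [wD_eq n k a t q hql, if_neg (by omega)]; ring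
      have hmonok : auxB n a q.val ≤ auxB n a k := by
        have h := auxB_mono n a ha hqk hqk2
        have : (0:ℝ) ≤ (q.val:ℝ) - (k:ℝ) := by
          have : (k:ℝ) ≤ (q.val:ℝ) := by exact_mod_cast hqk
          linarith
        linarith
      rw [hwp, hwq]
      linarith
    · push_neg at hqk
      have hwq : wD n k a t q = auxB n a q.val - t := by
        rw [wD_eq n k a t q hql, if_pos (by omega)]
      have hmono0q : auxB n a q.val ≤ auxB n a 0 := by
        have h := auxB_mono n a ha (Nat.zero_le q.val) hqk2
        have h2 : (0:ℝ) ≤ (q.val:ℝ) := by positivity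
        push_cast at h
        linarith
      rw [hwp, hwq]
      linarith

lemma signG_minus (hn : 3 ≤ n) (hk1 : 1 ≤ k) (hkn : k ≤ n - 2)
    (ha : ∀ u, 1 ≤ u → u ≤ n → 0 ≤ a u) (ht : MD n k a < t) (p q : Fin n) (hpq : p < q)
    (hpk : p.val < k) (hqk : k ≤ q.val) : wD n k a t p - wD n k a t q < 0 := by
  have hq : q.val < n := q.isLt
  have hpq' : p.val < q.val := hpq
  have hp1 : p.val + 1 ≠ n := by omega
  have hM := MD_eq n k a hn hkn
  have hMt : (MD n k a : ℝ) < (t : ℝ) := by exact_mod_cast ht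
  have hwp : wD n k a t p = auxB n a p.val - t := by
    rw [wD_eq n k a t p hp1, if_pos (by omega)]
  have hmono0 : auxB n a p.val ≤ auxB n a 0 := by
    have h := auxB_mono n a ha (Nat.zero_le p.val) (by omega : p.val ≤ n - 2)
    have h2 : (0:ℝ) ≤ (p.val:ℝ) := by positivity
    push_cast at h
    linarith
  have hBk : (1:ℝ) ≤ auxB n a k := auxB_ge n a hn ha (by omega)
  by_cases hql : q.val + 1 = n
  · have hwq := wD_last n k a t q hql
    have hTp : auxT n a p.val ≤ auxT n a 0 := auxT_le n a ha (Nat.zero_le _) (by omega)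
    have hTk : 0 ≤ auxT n a k := auxT_nonneg n a ha k
    have han : (0:ℝ) ≤ (a n : ℝ) := by exact_mod_cast ha n (by omega) le_rfl
    have hck : (k:ℝ) + 2 ≤ (n:ℝ) := by exact_mod_cast (by omega : k + 2 ≤ n)
    have hp0 : (0:ℝ) ≤ (p.val:ℝ) := by positivity
    rw [hwp, hwq]
    simp only [auxB] at hM ⊢
    linarith
  · have hwq : wD n k a t q = auxB n a q.val := by
      rw [wD_eq n k a t q hql, if_neg (by omega)]; ring
    have hBq : (1:ℝ) ≤ auxB n a q.val := auxB_ge n a hn ha (by omega)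
    rw [hwp, hwq]
    linarith

lemma sign_x0 (hn : 3 ≤ n) (hk1 : 1 ≤ k) (hkn : k ≤ n - 2)
    (ha : ∀ u, 1 ≤ u → u ≤ n → 0 ≤ a u) (ht : t ≤ MD n k a) :
    0 ≤ wD n k a t ⟨0, by omega⟩ + wD n k a t ⟨k, by omega⟩ := by
  have hM := MD_eq n k a hn hkn
  have hMt : (t : ℝ) ≤ (MD n k a : ℝ) := by exact_mod_cast ht
  have hwp : wD n k a t ⟨0, by omega⟩ = auxB n a 0 - t := by
    rw [wD_eq n k a t _ (by simp; omega), if_pos (by simp; omega)]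
  have hwq : wD n k a t ⟨k, by omega⟩ = auxB n a k := by
    rw [wD_eq n k a t _ (by simp; omega), if_neg (by simp)]; ring
  rw [hwp, hwq]
  linarith

end Signs

/-- Top-index criterion of type `D`, `k ≤ n-2`: `λ+ρ-tλ_k` is regular of index
`dim Dₙ/P(α_k) = k(4n-1-3k)/2` iff `t > M^D_{k,a}`. -/
theorem top_index_criterion_D_lt (n k : ℕ) (hn : 3 ≤ n) (hk1 : 1 ≤ k) (hkn : k ≤ n - 2)
    (a : ℕ → ℤ) (ha : ∀ u, 1 ≤ u → u ≤ n → 0 ≤ a u) (t : ℤ) :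
    {α ∈ PhiD n | ip n (wD n k a t) α < 0}.ncard = k * (4 * n - 1 - 3 * k) / 2 ↔
      MD n k a < t := by
  classical
  set w := wD n k a t with hw
  set Fp := (univ : Finset (Fin n × Fin n)).filter
    (fun pq => pq.1 < pq.2 ∧ w pq.1 + w pq.2 < 0) with hFp
  set Fm := (univ : Finset (Fin n × Fin n)).filter
    (fun pq => pq.1 < pq.2 ∧ w pq.1 - w pq.2 < 0) with hFm
  set Gp := (univ : Finset (Fin n × Fin n)).filter
    (fun pq => pq.1 < pq.2 ∧ pq.1.val < k) with hGp
  set Gm := (univ : Finset (Fin n × Fin n)).filter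
    (fun pq => pq.1 < pq.2 ∧ pq.1.val < k ∧ k ≤ pq.2.val) with hGm
  set plusf : Fin n × Fin n → (Fin n → ℝ) :=
    fun x => fun i => (if i = x.1 then (1:ℝ) else 0) + (if i = x.2 then 1 else 0) with hplusf
  set minusf : Fin n × Fin n → (Fin n → ℝ) :=
    fun x => fun i => (if i = x.1 then (1:ℝ) else 0) - (if i = x.2 then 1 else 0) with hminusf
  have hipp : ∀ p q : Fin n, p ≠ q →
      ip n w (fun i => (if i = p then (1:ℝ) else 0) + (if i = q then 1 else 0)) = w p + w q := by
    intro p q h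
    rw [ip]
    exact ip_plus n w p q h
  have hipm : ∀ p q : Fin n, p ≠ q →
      ip n w (fun i => (if i = p then (1:ℝ) else 0) - (if i = q then 1 else 0)) = w p - w q := by
    intro p q h
    rw [ip]
    exact ip_minus n w p q h
  -- the set as a union of two finset images
  have hS : {α ∈ PhiD n | ip n w α < 0} = ↑(Fp.image plusf ∪ Fm.image minusf) := by
    ext α
    simp only [Set.mem_setOf_eq, Finset.coe_union, Set.mem_union, Finset.mem_coe,
      Finset.mem_image, Finset.mem_filter, Finset.mem_univ, true_and, hFp, hFm]
    constructor
    · rintro ⟨hPhi, hip⟩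
      rcases hPhi with ⟨p, q, hpq, rfl⟩ | ⟨p, q, hpq, rfl⟩
      · exact Or.inl ⟨(p, q), ⟨hpq, by rwa [hipp p q hpq.ne] at hip⟩, rfl⟩
      · exact Or.inr ⟨(p, q), ⟨hpq, by rwa [hipm p q hpq.ne] at hip⟩, rfl⟩
    · rintro (⟨⟨p, q⟩, ⟨hpq, hneg⟩, rfl⟩ | ⟨⟨p, q⟩, ⟨hpq, hneg⟩, rfl⟩)
      · exact ⟨Or.inl ⟨p, q, hpq, rfl⟩, by rw [hipp p q hpq.ne]; exact hneg⟩
      · exact ⟨Or.inr ⟨p, q, hpq, rfl⟩, by rw [hipm p q hpq.ne]; exact hneg⟩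
  have hinjp : Set.InjOn plusf ↑Fp := by
    intro x hx y hy he
    simp only [Finset.coe_filter, Set.mem_setOf_eq, Finset.mem_univ, true_and, hFp] at hx hy
    obtain ⟨h1, -⟩ := hx
    obtain ⟨h2, -⟩ := hy
    have d1 : x.1 = y.1 ∨ x.1 = y.2 := by
      by_contra hc
      push_neg at hc
      have hp := congrFun he x.1
      simp [hplusf, hc.1, hc.2, ne_of_lt h1] at hp
    have d2 : x.2 = y.1 ∨ x.2 = y.2 := by
      by_contra hc
      push_neg at hc
      have hp := congrFun he x.2
      simp [hplusf, hc.1, hc.2, (ne_of_lt h1).symm] at hp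
    have d3 : y.1 = x.1 ∨ y.1 = x.2 := by
      by_contra hc
      push_neg at hc
      have hp := congrFun he y.1
      simp [hplusf, hc.1, hc.2, ne_of_lt h2] at hp
    have v1 : x.1.val < x.2.val := h1
    have v2 : y.1.val < y.2.val := h2
    have D1 : x.1.val = y.1.val ∨ x.1.val = y.2.val := d1.imp (congrArg Fin.val) (congrArg Fin.val)
    have D2 : x.2.val = y.1.val ∨ x.2.val = y.2.val := d2.imp (congrArg Fin.val) (congrArg Fin.val)
    have D3 : y.1.val = x.1.val ∨ y.1.val = x.2.val := d3.imp (congrArg Fin.val) (congrArg Fin.val)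
    have hx1 : x.1 = y.1 := Fin.ext (by omega)
    have hx2 : x.2 = y.2 := Fin.ext (by omega)
    exact Prod.ext hx1 hx2
  have hinjm : Set.InjOn minusf ↑Fm := by
    intro x hx y hy he
    simp only [Finset.coe_filter, Set.mem_setOf_eq, Finset.mem_univ, true_and, hFm] at hx hy
    obtain ⟨h1, -⟩ := hx
    obtain ⟨h2, -⟩ := hy
    have d1 : x.1 = y.1 := by
      have hp := congrFun he x.1
      simp only [hminusf, eq_self_iff_true, if_true, if_neg (ne_of_lt h1)] at hp
      split_ifs at hp <;> first | assumption | norm_num at hp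
    have d2 : x.2 = y.2 := by
      have hp := congrFun he x.2
      simp only [hminusf, eq_self_iff_true, if_true, if_neg (Ne.symm (ne_of_lt h1))] at hp
      split_ifs at hp <;> first | assumption | norm_num at hp
    exact Prod.ext d1 d2
  have hdisj : Disjoint (Fp.image plusf) (Fm.image minusf) := by
    rw [Finset.disjoint_left]
    rintro α hα hα'
    simp only [Finset.mem_image, Finset.mem_filter, Finset.mem_univ, true_and, hFp, hFm]
      at hα hα'
    obtain ⟨x, ⟨hx1, -⟩, rfl⟩ := hα
    obtain ⟨y, ⟨hy1, -⟩, hy2⟩ := hα'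
    have hp := congrFun hy2 y.2
    simp only [hminusf, hplusf, eq_self_iff_true, if_true,
      if_neg (Ne.symm (ne_of_lt hy1))] at hp
    split_ifs at hp <;> norm_num at hp
  have hcard : {α ∈ PhiD n | ip n w α < 0}.ncard = Fp.card + Fm.card := by
    rw [hS, Set.ncard_coe_finset, Finset.card_union_of_disjoint hdisj,
      Finset.card_image_of_injOn hinjp, Finset.card_image_of_injOn hinjm]
  -- cardinalities of the model sets
  have hGmeq : Gm = (univ : Finset (Fin n × Fin n)).filter
      (fun pq => pq.1.val < k ∧ k ≤ pq.2.val) := by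
    ext x
    simp only [Finset.mem_filter, Finset.mem_univ, true_and, Fin.lt_def, hGm]
    omega
  have hGmcard : Gm.card = k * (n - k) := by
    rw [hGmeq, card_pairs_mixed n k (by omega)]
  have hGpsplit : Gp = ((univ : Finset (Fin n × Fin n)).filter
      (fun pq => pq.1 < pq.2 ∧ pq.2.val < k)) ∪ Gm := by
    ext x
    simp only [Finset.mem_filter, Finset.mem_univ, true_and, Finset.mem_union,
      Fin.lt_def, hGp, hGm]
    omega
  have hGpdisj : Disjoint ((univ : Finset (Fin n × Fin n)).filter
      (fun pq => pq.1 < pq.2 ∧ pq.2.val < k)) Gm := by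
    rw [Finset.disjoint_left]
    intro x hx hx'
    simp only [Finset.mem_filter, Finset.mem_univ, true_and, Fin.lt_def, hGm] at hx hx'
    omega
  have hGpcard : Gp.card = ((univ : Finset (Fin n × Fin n)).filter
      (fun pq => pq.1 < pq.2 ∧ pq.2.val < k)).card + k * (n - k) := by
    rw [hGpsplit, Finset.card_union_of_disjoint hGpdisj, hGmcard]
  have hA := card_pairs_lt n k (by omega)
  -- total value
  have htop : Gp.card + Gm.card = k * (4 * n - 1 - 3 * k) / 2 := by
    have h2 : 2 * (Gp.card + Gm.card) = k * (4 * n - 1 - 3 * k) := by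
      rw [hGpcard, hGmcard]
      zify [show 3 * k ≤ 4 * n - 1 by omega, show 1 ≤ 4 * n by omega, show k ≤ n by omega]
      zify at hA
      linarith [hA]
    omega
  -- always-valid inclusions
  have hsubp : Fp ⊆ Gp := by
    intro x hx
    simp only [Finset.mem_filter, Finset.mem_univ, true_and, hFp, hGp] at hx ⊢
    exact ⟨hx.1, signF_plus hn hk1 hkn ha x.1 x.2 hx.1 hx.2⟩
  have hsubm : Fm ⊆ Gm := by
    intro x hx
    simp only [Finset.mem_filter, Finset.mem_univ, true_and, hFm, hGm] at hx ⊢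
    exact ⟨hx.1, signF_minus hn hk1 hkn ha x.1 x.2 hx.1 hx.2⟩
  rw [hcard, ← htop]
  constructor
  · intro hcount
    by_contra hts
    push_neg at hts
    -- the root e₁ + e_{k+1} is not negative
    set x0 : Fin n × Fin n := (⟨0, by omega⟩, ⟨k, by omega⟩) with hx0
    have hx0G : x0 ∈ Gp := by
      simp only [Finset.mem_filter, Finset.mem_univ, true_and, hGp, hx0, Fin.lt_def]
      omega
    have hx0F : x0 ∉ Fp := by
      simp only [Finset.mem_filter, Finset.mem_univ, true_and, hFp, hx0]
      intro hcon
      exact absurd hcon.2 (not_lt.mpr (sign_x0 hn hk1 hkn ha hts))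
    have hsub' : Fp ⊆ Gp.erase x0 := by
      intro x hx
      exact Finset.mem_erase.mpr ⟨fun he => hx0F (he ▸ hx), hsubp hx⟩
    have h1 : Fp.card ≤ (Gp.erase x0).card := Finset.card_le_card hsub'
    rw [Finset.card_erase_of_mem hx0G] at h1
    have h2 : Fm.card ≤ Gm.card := Finset.card_le_card hsubm
    have h3 : 1 ≤ Gp.card := Finset.card_pos.mpr ⟨x0, hx0G⟩
    omega
  · intro ht
    have hFpGp : Fp = Gp := by
      apply Finset.Subset.antisymm hsubp
      intro x hx
      simp only [Finset.mem_filter, Finset.mem_univ, true_and, hFp, hGp] at hx ⊢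
      exact ⟨hx.1, signG_plus hn hk1 hkn ha ht x.1 x.2 hx.1 hx.2⟩
    have hFmGm : Fm = Gm := by
      apply Finset.Subset.antisymm hsubm
      intro x hx
      simp only [Finset.mem_filter, Finset.mem_univ, true_and, hFm, hGm] at hx ⊢
      exact ⟨hx.1, signG_minus hn hk1 hkn ha ht x.1 x.2 hx.1 hx.2.1 hx.2.2⟩
    rw [hFpGp, hFmGm]
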